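/- Let α₀ > 0 and let l : [0, α₀] → ℝ be a positive differentiable function satisfying l'(α) = (l(α)/α)·(1 + E(α)) for α ∈ (0, α₀], where |E(α)| ≤ 1/sinh²(R) for a fixed R > 0. Then for all 0 < α ≤ β ≤ α₀, the ratio satisfies (α/β)^(1+1/sinh²R) ≤ l(α)/l(β) ≤ (α/β)^(1−1/sinh²R). -/

import Mathlib

private lemma aux_mono (α₀ : ℝ) (l E : ℝ → ℝ)
    (hl : ∀ α ∈ Set.Icc (0:ℝ) α₀, 0 < l α)
    (hderiv : ∀ α ∈ Set.Ioc (0:ℝ) α₀, HasDerivAt l (l α / α * (1 + E α)) α)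
    (c : ℝ) (hc : ∀ x ∈ Set.Ioc (0:ℝ) α₀, c ≤ 1 + E x)
    {α β : ℝ} (hα : 0 < α) (hαβ : α ≤ β) (hβ : β ≤ α₀) :
    Real.log (l α) - c * Real.log α ≤ Real.log (l β) - c * Real.log β := by
  set f : ℝ → ℝ := fun x => Real.log (l x) - c * Real.log x with hf
  have hsub : Set.Icc α β ⊆ Set.Ioc (0:ℝ) α₀ := fun x hx =>
    ⟨lt_of_lt_of_le hα hx.1, le_trans hx.2 hβ⟩
  have key : ∀ x ∈ Set.Ioc (0:ℝ) α₀, HasDerivAt f ((1 + E x - c) / x) x := by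
    intro x hx
    have hlx : l x ≠ 0 := (hl x ⟨le_of_lt hx.1, hx.2⟩).ne'
    have h1 : HasDerivAt (fun y => Real.log (l y)) (l x / x * (1 + E x) / l x) x :=
      (hderiv x hx).log hlx
    have h2 : HasDerivAt (fun y => c * Real.log y) (c * x⁻¹) x :=
      (Real.hasDerivAt_log hx.1.ne').const_mul c
    have := h1.sub h2
    refine this.congr_deriv ?_
    field_simp [hlx, hx.1.ne']
  have hmono : MonotoneOn f (Set.Icc α β) := by
    apply monotoneOn_of_hasDerivWithinAt_nonneg (convex_Icc α β)
    · intro x hx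
      exact ((key x (hsub hx)).continuousAt).continuousWithinAt
    · intro x hx
      rw [interior_Icc] at hx
      exact (key x (hsub (Set.Ioo_subset_Icc_self hx))).hasDerivWithinAt
    · intro x hx
      rw [interior_Icc] at hx
      have hx' := hsub (Set.Ioo_subset_Icc_self hx)
      have h1 : (0:ℝ) ≤ 1 + E x - c := by linarith [hc x hx']
      exact div_nonneg h1 hx'.1.le
  exact hmono (Set.left_mem_Icc.2 hαβ) (Set.right_mem_Icc.2 hαβ) hαβ

private lemma aux_anti (α₀ : ℝ) (l E : ℝ → ℝ)
    (hl : ∀ α ∈ Set.Icc (0:ℝ) α₀, 0 < l α)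
    (hderiv : ∀ α ∈ Set.Ioc (0:ℝ) α₀, HasDerivAt l (l α / α * (1 + E α)) α)
    (c : ℝ) (hc : ∀ x ∈ Set.Ioc (0:ℝ) α₀, 1 + E x ≤ c)
    {α β : ℝ} (hα : 0 < α) (hαβ : α ≤ β) (hβ : β ≤ α₀) :
    Real.log (l β) - c * Real.log β ≤ Real.log (l α) - c * Real.log α := by
  set f : ℝ → ℝ := fun x => Real.log (l x) - c * Real.log x with hf
  have hsub : Set.Icc α β ⊆ Set.Ioc (0:ℝ) α₀ := fun x hx =>
    ⟨lt_of_lt_of_le hα hx.1, le_trans hx.2 hβ⟩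
  have key : ∀ x ∈ Set.Ioc (0:ℝ) α₀, HasDerivAt f ((1 + E x - c) / x) x := by
    intro x hx
    have hlx : l x ≠ 0 := (hl x ⟨le_of_lt hx.1, hx.2⟩).ne'
    have h1 : HasDerivAt (fun y => Real.log (l y)) (l x / x * (1 + E x) / l x) x :=
      (hderiv x hx).log hlx
    have h2 : HasDerivAt (fun y => c * Real.log y) (c * x⁻¹) x :=
      (Real.hasDerivAt_log hx.1.ne').const_mul c
    have := h1.sub h2
    refine this.congr_deriv ?_
    field_simp [hlx, hx.1.ne']
  have hmono : AntitoneOn f (Set.Icc α β) := by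
    apply antitoneOn_of_hasDerivWithinAt_nonpos (convex_Icc α β)
    · intro x hx
      exact ((key x (hsub hx)).continuousAt).continuousWithinAt
    · intro x hx
      rw [interior_Icc] at hx
      exact (key x (hsub (Set.Ioo_subset_Icc_self hx))).hasDerivWithinAt
    · intro x hx
      rw [interior_Icc] at hx
      have hx' := hsub (Set.Ioo_subset_Icc_self hx)
      have h1 : 1 + E x - c ≤ 0 := by linarith [hc x hx']
      have h2 : (0:ℝ) < x := hx'.1
      exact div_nonpos_of_nonpos_of_nonneg h1 h2.le
  exact hmono (Set.left_mem_Icc.2 hαβ) (Set.right_mem_Icc.2 hαβ) hαβ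

/-- Gronwall-type consequence of the Hodgson–Kerckhoff derivative estimate
`l'(α) = (l(α)/α)(1 + E(α))` with `|E| ≤ 1/sinh² R`. -/
theorem stmt_0 (α₀ R : ℝ) (hα₀ : 0 < α₀) (hR : 0 < R)
    (l E : ℝ → ℝ)
    (hl : ∀ α ∈ Set.Icc (0:ℝ) α₀, 0 < l α)
    (hderiv : ∀ α ∈ Set.Ioc (0:ℝ) α₀, HasDerivAt l (l α / α * (1 + E α)) α)
    (hE : ∀ α ∈ Set.Ioc (0:ℝ) α₀, |E α| ≤ 1 / Real.sinh R ^ 2) :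
    ∀ α β : ℝ, 0 < α → α ≤ β → β ≤ α₀ →
      (α / β) ^ (1 + 1 / Real.sinh R ^ 2 : ℝ) ≤ l α / l β ∧
      l α / l β ≤ (α / β) ^ (1 - 1 / Real.sinh R ^ 2 : ℝ) := by
  intro α β hα hαβ hβ
  set ε : ℝ := 1 / Real.sinh R ^ 2 with hε
  have hβ0 : 0 < β := lt_of_lt_of_le hα hαβ
  have hlα : 0 < l α := hl α ⟨hα.le, le_trans hαβ hβ⟩
  have hlβ : 0 < l β := hl β ⟨hβ0.le, hβ⟩
  have hab : 0 < α / β := div_pos hα hβ0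
  have hlab : 0 < l α / l β := div_pos hlα hlβ
  have hlog : Real.log (α / β) = Real.log α - Real.log β := Real.log_div hα.ne' hβ0.ne'
  have hllog : Real.log (l α / l β) = Real.log (l α) - Real.log (l β) :=
    Real.log_div hlα.ne' hlβ.ne'
  constructor
  · -- lower bound: use c = 1 + ε, antitone
    have h := aux_anti α₀ l E hl hderiv (1 + ε)
      (fun x hx => by linarith [hE x hx, (abs_le.1 (hE x hx)).2]) hα hαβ hβ
    rw [← Real.log_le_log_iff (Real.rpow_pos_of_pos hab _) hlab,
      Real.log_rpow hab, hllog, hlog]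
    nlinarith [h]
  · -- upper bound: use c = 1 - ε, monotone
    have h := aux_mono α₀ l E hl hderiv (1 - ε)
      (fun x hx => by linarith [(abs_le.1 (hE x hx)).1]) hα hαβ hβ
    rw [← Real.log_le_log_iff hlab (Real.rpow_pos_of_pos hab _),
      Real.log_rpow hab, hllog, hlog]
    nlinarith [h]
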